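/- Let f(n) be the number of functions c : Fin n → {Empty, Blue, Red} such that no two adjacent indices are both non-Empty. Then 3·f(n) = 2^(n+2) - (-1)^n for all n ≥ 0, where this is interpreted as an identity of integers. -/

import Mathlib

inductive Color : Type
  | Empty | Blue | Red
  deriving DecidableEq

instance instFintypeColor : Fintype Color :=
  Fintype.ofList [Color.Empty, Color.Blue, Color.Red] (by intro x; cases x <;> simp)

/-- Number of `{Empty, Blue, Red}`-colorings of `Fin n` in which no two adjacent
indices are both non-`Empty` (positions of Cis on the path `P_n`). -/
def cisPath (n : ℕ) : ℕ :=
  Fintype.card {c : Fin n → Color //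
    ∀ i j : Fin n, (j : ℕ) = (i : ℕ) + 1 →
      ¬(c i ≠ Color.Empty ∧ c j ≠ Color.Empty)}

abbrev Good (n : ℕ) (c : Fin n → Color) : Prop :=
  ∀ i j : Fin n, (j : ℕ) = (i : ℕ) + 1 →
    ¬(c i ≠ Color.Empty ∧ c j ≠ Color.Empty)

lemma cisPath_eq (n : ℕ) : cisPath n = Fintype.card {c : Fin n → Color // Good n c} := rfl

lemma good_init {n : ℕ} {c : Fin (n+1) → Color} (hc : Good (n+1) c) :
    Good n (Fin.init c) := by
  intro i j hij
  simpa [Fin.init] using hc i.castSucc j.castSucc (by simpa using hij)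

lemma good_snoc_empty {n : ℕ} {d : Fin n → Color} (hd : Good n d) :
    Good (n+1) (Fin.snoc d Color.Empty) := by
  intro i j hij
  induction j using Fin.lastCases with
  | last => simp
  | cast j' =>
    have hij' : (j' : ℕ) = (i : ℕ) + 1 := by simpa using hij
    have hi : (i : ℕ) < n := by have := j'.isLt; omega
    have : i = Fin.castSucc ⟨i, hi⟩ := by ext; simp
    rw [this, Fin.snoc_castSucc, Fin.snoc_castSucc]
    exact hd ⟨i, hi⟩ j' (by simpa using hij')

lemma good_snoc2 {n : ℕ} {d : Fin (n+1) → Color} (hd : Good (n+1) d)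
    (hlast : d (Fin.last n) = Color.Empty) (x : Color) :
    Good (n+2) (Fin.snoc d x) := by
  intro i j hij
  induction j using Fin.lastCases with
  | last =>
    have hi : i = Fin.castSucc (Fin.last n) := by
      ext
      simp only [Fin.val_last, Fin.coe_castSucc] at hij ⊢
      omega
    rw [hi, Fin.snoc_castSucc]
    simp [hlast]
  | cast j' =>
    have hij' : (j' : ℕ) = (i : ℕ) + 1 := by simpa using hij
    have hi : (i : ℕ) < n + 1 := by have := j'.isLt; omega
    have : i = Fin.castSucc ⟨i, hi⟩ := by ext; simp
    rw [this, Fin.snoc_castSucc, Fin.snoc_castSucc]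
    exact hd ⟨i, hi⟩ j' (by simpa using hij')

/-- Colorings of `Fin (n+1)` ending with `Empty` are equivalent to colorings of `Fin n`. -/
def equivE1 (n : ℕ) :
    {c : Fin (n+1) → Color // Good (n+1) c ∧ c (Fin.last n) = Color.Empty}
    ≃ {c : Fin n → Color // Good n c} where
  toFun c := ⟨Fin.init c.1, good_init c.2.1⟩
  invFun d := ⟨Fin.snoc d.1 Color.Empty, good_snoc_empty d.2, by simp⟩
  left_inv c := Subtype.ext (by
    conv_rhs => rw [← Fin.snoc_init_self c.1]
    rw [c.2.2])
  right_inv d := Subtype.ext (by simp)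

/-- Colorings of `Fin (n+2)` ending with a non-`Empty` color. -/
def equivE2 (n : ℕ) :
    {c : Fin (n+2) → Color // Good (n+2) c ∧ c (Fin.last (n+1)) ≠ Color.Empty}
    ≃ {c : Fin (n+1) → Color // Good (n+1) c ∧ c (Fin.last n) = Color.Empty}
      × {x : Color // x ≠ Color.Empty} where
  toFun c := (⟨Fin.init c.1, good_init c.2.1, by
      have h := c.2.1 (Fin.castSucc (Fin.last n)) (Fin.last (n+1)) (by simp)
      by_contra hne
      exact h ⟨by simpa [Fin.init] using hne, c.2.2⟩⟩,
    ⟨c.1 (Fin.last (n+1)), c.2.2⟩)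
  invFun p := ⟨Fin.snoc p.1.1 p.2.1, good_snoc2 p.1.2.1 p.1.2.2 _, by simp [p.2.2]⟩
  left_inv c := Subtype.ext (by simp [Fin.snoc_init_self])
  right_inv p := by
    refine Prod.ext (Subtype.ext ?_) (Subtype.ext ?_) <;> simp

lemma card_color_ne : Fintype.card {x : Color // x ≠ Color.Empty} = 2 := by decide

lemma cisPath_rec (n : ℕ) : cisPath (n+2) = cisPath (n+1) + 2 * cisPath n := by
  rw [cisPath_eq]
  have hsplit : Fintype.card {c : Fin (n+2) → Color // Good (n+2) c}
      = Fintype.card {c : Fin (n+2) → Color // Good (n+2) c ∧ c (Fin.last (n+1)) = Color.Empty}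
        + Fintype.card {c : Fin (n+2) → Color // Good (n+2) c ∧ c (Fin.last (n+1)) ≠ Color.Empty} := by
    rw [Fintype.card_congr
      ((Equiv.sumCompl (fun c : {c : Fin (n+2) → Color // Good (n+2) c} =>
          c.1 (Fin.last (n+1)) = Color.Empty)).symm), Fintype.card_sum]
    congr 1
    · exact Fintype.card_congr (Equiv.subtypeSubtypeEquivSubtypeInter
        (Good (n+2)) (fun c => c (Fin.last (n+1)) = Color.Empty))
    · exact Fintype.card_congr (Equiv.subtypeSubtypeEquivSubtypeInter
        (Good (n+2)) (fun c => c (Fin.last (n+1)) ≠ Color.Empty))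
  rw [hsplit, Fintype.card_congr (equivE1 (n+1)), Fintype.card_congr (equivE2 n),
    Fintype.card_prod, Fintype.card_congr (equivE1 n), card_color_ne, cisPath_eq, cisPath_eq]
  ring

lemma cisPath_zero : cisPath 0 = 1 := by decide
lemma cisPath_one : cisPath 1 = 3 := by decide

theorem cisPath_closed_form (n : ℕ) :
    (3 : ℤ) * cisPath n = 2 ^ (n + 2) - (-1) ^ n := by
  induction n using Nat.twoStepInduction with
  | zero => norm_num [cisPath_zero]
  | one => norm_num [cisPath_one]
  | more n ih1 ih2 =>
    rw [cisPath_rec]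
    push_cast
    linear_combination ih2 + 2 * ih1
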